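/- Let a < b be real numbers, let a = x_0 < x_1 < ⋯ < x_n = b be a partition of [a,b] with mesh h := max_{1≤i≤n} (x_i − x_{i−1}), and let μ be a finite positive Borel measure on ℝ with support contained in [a,b]. Let g : ℝ → ℝ be square-integrable on [a,b], let c ∈ ℝ, define v(x) = c + ∫_a^x g(t) dt for x ∈ [a,b], and let Pv be the piecewise linear interpolant of v with respect to the partition. Then (∫ |Pv − v|² dμ)^{1/2} ≤ 2 μ([a,b])^{1/2} h^{1/2} (∫_a^b g(t)² dt)^{1/2}. -/

import Mathlib

open MeasureTheory Set intervalIntegral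

/-- Let `a = x_0 < ⋯ < x_n = b` be a partition with mesh `h`, let `μ`
be a finite positive Borel measure with support contained in `[a,b]`, let
`v x = c + ∫_a^x g` with `g` square-integrable on `[a,b]`, and let `P` be the
piecewise linear interpolant of `v` on the partition. Then
`(∫ |P − v|² dμ)^{1/2} ≤ 2 μ([a,b])^{1/2} h^{1/2} (∫_a^b g²)^{1/2}`. -/
theorem interpolant_L2mu_estimate
    (a b : ℝ) (hab : a < b)
    (n : ℕ) (hn : 1 ≤ n)
    (x : ℕ → ℝ) (hx0 : x 0 = a) (hxn : x n = b)
    (hmono : ∀ i < n, x i < x (i + 1))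
    (h : ℝ) (hh : h = (Finset.Icc 1 n).sup' (by
      simpa using Finset.nonempty_Icc.mpr hn) (fun i => x i - x (i - 1)))
    (μ : Measure ℝ) [IsFiniteMeasure μ]
    (hsupp : μ (Set.Icc a b)ᶜ = 0)
    (g : ℝ → ℝ)
    (hg : MeasureTheory.MemLp g 2 (volume.restrict (Set.Icc a b)))
    (c : ℝ) (v : ℝ → ℝ)
    (hv : ∀ t ∈ Set.Icc a b, v t = c + ∫ s in a..t, g s)
    (P : ℝ → ℝ)
    (hP : ∀ i, 1 ≤ i → i ≤ n → ∀ t ∈ Set.Icc (x (i - 1)) (x i),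
      P t = v (x (i - 1)) + (v (x i) - v (x (i - 1))) * (t - x (i - 1)) / (x i - x (i - 1))) :
    Real.sqrt (∫ t, (P t - v t) ^ 2 ∂μ) ≤
      2 * Real.sqrt (μ (Set.Icc a b)).toReal * Real.sqrt h *
        Real.sqrt (∫ s in Set.Icc a b, (g s) ^ 2) := by
  set I := Real.sqrt (∫ s in Set.Icc a b, (g s) ^ 2) with hI
  have hI0 : 0 ≤ I := Real.sqrt_nonneg _
  have hg1 : IntegrableOn g (Set.Icc a b) := hg.integrable (by norm_num)
  have hg2 : Integrable (fun s => g s ^ 2) (volume.restrict (Set.Icc a b)) :=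
    hg.integrable_sq
  -- monotonicity of the partition
  have hxmono : ∀ j k, j ≤ k → k ≤ n → x j ≤ x k := by
    intro j k hjk hkn
    induction k with
    | zero => simp_all
    | succ k ih =>
      rcases Nat.eq_or_lt_of_le hjk with rfl | hlt
      · exact le_rfl
      · exact le_trans (ih (by omega) (by omega)) (le_of_lt (hmono k (by omega)))
  have hhi : ∀ i, 1 ≤ i → i ≤ n → x i - x (i - 1) ≤ h := by
    intro i h1 h2
    rw [hh]
    exact Finset.le_sup' (fun i => x i - x (i - 1)) (Finset.mem_Icc.mpr ⟨h1, h2⟩)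
  -- key increment estimate
  have key : ∀ r s : ℝ, a ≤ r → r ≤ s → s ≤ b → s - r ≤ h →
      |(∫ u in a..s, g u) - (∫ u in a..r, g u)| ≤ Real.sqrt h * I := by
    intro r s har hrs hsb hsr
    have hsub : Set.Icc r s ⊆ Set.Icc a b := Set.Icc_subset_Icc har hsb
    have hgr : IntegrableOn g (Set.Icc r s) := hg1.mono_set hsub
    have hint : ∀ z : ℝ, a ≤ z → z ≤ b → IntervalIntegrable g volume a z := by
      intro z h1 h2
      rw [intervalIntegrable_iff_integrableOn_Icc_of_le h1]
      exact hg1.mono_set (Set.Icc_subset_Icc le_rfl h2)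
    have heq : (∫ u in a..s, g u) - (∫ u in a..r, g u) = ∫ u in r..s, g u :=
      intervalIntegral.integral_interval_sub_left (hint s (le_trans har hrs) hsb)
        (hint r har (le_trans hrs hsb))
    rw [heq]
    have h1 : |∫ u in r..s, g u| ≤ ∫ u in r..s, |g u| :=
      intervalIntegral.abs_integral_le_integral_abs hrs
    have h2 : (∫ u in r..s, |g u|) = ∫ u in Set.Icc r s, |g u| := by
      rw [intervalIntegral.integral_of_le hrs, MeasureTheory.integral_Icc_eq_integral_Ioc]
    -- Cauchy–Schwarz
    have hmem : MemLp (fun u => |g u|) 2 (volume.restrict (Set.Icc r s)) := by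
      have := (hg.mono_measure (Measure.restrict_mono hsub le_rfl)).abs
      exact this
    have hcs : (∫ u in Set.Icc r s, |g u|) ≤
        (∫ u in Set.Icc r s, |g u| ^ (2:ℝ)) ^ (1/(2:ℝ)) *
        (∫ _u in Set.Icc r s, (1:ℝ) ^ (2:ℝ)) ^ (1/(2:ℝ)) := by
      have := MeasureTheory.integral_mul_le_Lp_mul_Lq_of_nonneg
        (⟨by norm_num, by norm_num, by norm_num⟩ : Real.HolderConjugate 2 2)
        (μ := volume.restrict (Set.Icc r s))
        (f := fun u => |g u|) (g := fun _ => (1:ℝ))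
        (Filter.Eventually.of_forall fun u => abs_nonneg _)
        (Filter.Eventually.of_forall fun u => zero_le_one)
        (by simpa using hmem) (by simpa using memLp_const (1:ℝ))
      simpa using this
    have e1 : (∫ u in Set.Icc r s, |g u| ^ (2:ℝ)) = ∫ u in Set.Icc r s, g u ^ 2 := by
      refine integral_congr_ae (Filter.Eventually.of_forall fun u => ?_)
      simp only [Real.rpow_two, sq_abs]
    have e2 : (∫ _u in Set.Icc r s, (1:ℝ) ^ (2:ℝ)) = s - r := by
      simp [Real.volume_Icc, ENNReal.toReal_ofReal (sub_nonneg.mpr hrs), hrs]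
    have hle : (∫ u in Set.Icc r s, g u ^ 2) ≤ ∫ s in Set.Icc a b, g s ^ 2 := by
      refine setIntegral_mono_set hg2 ?_ (HasSubset.Subset.eventuallyLE hsub)
      exact Filter.Eventually.of_forall fun u => sq_nonneg _
    have hnn : 0 ≤ ∫ u in Set.Icc r s, g u ^ 2 :=
      integral_nonneg fun _ => sq_nonneg _
    calc |∫ u in r..s, g u| ≤ ∫ u in Set.Icc r s, |g u| := h2 ▸ h1
      _ ≤ (∫ u in Set.Icc r s, |g u| ^ (2:ℝ)) ^ (1/(2:ℝ)) *
          (∫ _u in Set.Icc r s, (1:ℝ) ^ (2:ℝ)) ^ (1/(2:ℝ)) := hcs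
      _ = Real.sqrt (∫ u in Set.Icc r s, g u ^ 2) * Real.sqrt (s - r) := by
          rw [e1, e2, Real.sqrt_eq_rpow, Real.sqrt_eq_rpow]
      _ ≤ I * Real.sqrt h :=
          mul_le_mul (Real.sqrt_le_sqrt hle) (Real.sqrt_le_sqrt (by linarith))
            (Real.sqrt_nonneg _) hI0
      _ = Real.sqrt h * I := mul_comm _ _
  -- pointwise bound
  have hbound : ∀ t ∈ Set.Icc a b, |P t - v t| ≤ 2 * (Real.sqrt h * I) := by
    intro t ht
    obtain ⟨hta, htb⟩ := ht
    -- find the interval containing t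
    obtain ⟨j, hjn, hxjt, htxj⟩ : ∃ j, j < n ∧ x j ≤ t ∧ t ≤ x (j + 1) := by
      have hex : ∃ m, t ≤ x m := ⟨n, hxn ▸ htb⟩
      set m := Nat.find hex with hm
      have hmle : m ≤ n := Nat.find_min' hex (hxn ▸ htb)
      have htm : t ≤ x m := Nat.find_spec hex
      match hm' : m, hmle, htm with
      | 0, _, htm0 =>
        refine ⟨0, by omega, ?_, ?_⟩
        · rw [hx0]; exact hta
        · have : t = x 0 := le_antisymm (hm' ▸ htm0) (hx0 ▸ hta)
          rw [this]
          exact le_of_lt (hmono 0 (by omega))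
      | k + 1, hkle, htmk =>
        have hk : ¬ t ≤ x k := Nat.find_min hex (by omega)
        exact ⟨k, by omega, le_of_not_ge hk, htmk⟩
    have hj1 : a ≤ x j := hx0 ▸ hxmono 0 j (Nat.zero_le _) (by omega)
    have hj2 : x (j + 1) ≤ b := hxn ▸ hxmono (j + 1) n (by omega) le_rfl
    have hden : 0 < x (j + 1) - x j := sub_pos.mpr (hmono j hjn)
    have hPt : P t = v (x j) + (v (x (j + 1)) - v (x j)) * (t - x j) / (x (j + 1) - x j) := by
      have := hP (j + 1) (by omega) (by omega) t (by simpa using ⟨hxjt, htxj⟩)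
      simpa using this
    set lam : ℝ := (t - x j) / (x (j + 1) - x j) with hlam
    have hlam0 : 0 ≤ lam := div_nonneg (by linarith) (le_of_lt hden)
    have hlam1 : lam ≤ 1 := by
      rw [hlam, div_le_one hden]; linarith
    have hvt : v t = c + ∫ s in a..t, g s := hv t ⟨hta, htb⟩
    have hvj : v (x j) = c + ∫ s in a..(x j), g s := hv (x j) ⟨hj1, by linarith⟩
    have hvj1 : v (x (j + 1)) = c + ∫ s in a..(x (j + 1)), g s :=
      hv (x (j + 1)) ⟨by linarith, hj2⟩
    have hmesh : x (j + 1) - x j ≤ h := by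
      have := hhi (j + 1) (by omega) (by omega)
      simpa using this
    have b1 : |v t - v (x j)| ≤ Real.sqrt h * I := by
      rw [hvt, hvj]
      have := key (x j) t hj1 hxjt (by linarith) (by linarith)
      simpa using this
    have b2 : |v (x (j + 1)) - v (x j)| ≤ Real.sqrt h * I := by
      rw [hvj1, hvj]
      have := key (x j) (x (j + 1)) hj1 (le_of_lt (hmono j hjn)) hj2 hmesh
      simpa using this
    have hPd : P t - v t = (v (x j) - v t) + (v (x (j + 1)) - v (x j)) * lam := by
      rw [hPt, hlam]; ring
    calc |P t - v t| = |(v (x j) - v t) + (v (x (j + 1)) - v (x j)) * lam| := by rw [hPd]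
      _ ≤ |v (x j) - v t| + |(v (x (j + 1)) - v (x j)) * lam| := abs_add_le _ _
      _ ≤ Real.sqrt h * I + Real.sqrt h * I := by
          refine add_le_add ?_ ?_
          · rw [abs_sub_comm]; exact b1
          · rw [abs_mul]
            calc |v (x (j + 1)) - v (x j)| * |lam| ≤ (Real.sqrt h * I) * 1 := by
                  have : |lam| ≤ 1 := by rw [abs_of_nonneg hlam0]; exact hlam1
                  exact mul_le_mul b2 this (abs_nonneg _) (by positivity)
              _ = Real.sqrt h * I := mul_one _
      _ = 2 * (Real.sqrt h * I) := by ring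
  -- integrate the bound
  set K : ℝ := 2 * (Real.sqrt h * I) with hK
  have hK0 : 0 ≤ K := by positivity
  have hae : ∀ᵐ t ∂μ, t ∈ Set.Icc a b := by
    rw [MeasureTheory.ae_iff]
    exact hsupp
  have hint : ∫ t, (P t - v t) ^ 2 ∂μ ≤ K ^ 2 * (μ (Set.Icc a b)).toReal := by
    have hμuniv : μ Set.univ = μ (Set.Icc a b) := by
      refine le_antisymm ?_ (measure_mono (Set.subset_univ _))
      calc μ Set.univ = μ (Set.Icc a b ∪ (Set.Icc a b)ᶜ) := by rw [Set.union_compl_self]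
        _ ≤ μ (Set.Icc a b) + μ (Set.Icc a b)ᶜ := measure_union_le _ _
        _ = μ (Set.Icc a b) := by rw [hsupp, add_zero]
    have := MeasureTheory.integral_mono_of_nonneg
      (f := fun t => (P t - v t) ^ 2) (g := fun _ => K ^ 2) (μ := μ)
      (Filter.Eventually.of_forall fun t => sq_nonneg _)
      (integrable_const _)
      (by
        filter_upwards [hae] with t ht
        calc (P t - v t) ^ 2 = |P t - v t| ^ 2 := (sq_abs _).symm
          _ ≤ K ^ 2 := by
              have := hbound t ht
              exact pow_le_pow_left₀ (abs_nonneg _) this 2)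
    calc ∫ t, (P t - v t) ^ 2 ∂μ ≤ ∫ _t, K ^ 2 ∂μ := this
      _ = K ^ 2 * (μ Set.univ).toReal := by simp [measureReal_def, mul_comm]
      _ = K ^ 2 * (μ (Set.Icc a b)).toReal := by rw [hμuniv]
  calc Real.sqrt (∫ t, (P t - v t) ^ 2 ∂μ)
      ≤ Real.sqrt (K ^ 2 * (μ (Set.Icc a b)).toReal) := Real.sqrt_le_sqrt hint
    _ = K * Real.sqrt (μ (Set.Icc a b)).toReal := by
        rw [Real.sqrt_mul (sq_nonneg _), Real.sqrt_sq hK0]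
    _ = 2 * Real.sqrt (μ (Set.Icc a b)).toReal * Real.sqrt h * I := by
        rw [hK]; ring
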